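/- (Rankin orthoplex bound for spheres) If x₁,…,x_N are N points on a sphere of radius r in R^D with N > D + 1, then min_{i≠j} ‖x_i − x_j‖² ≤ 2r². -/

import Mathlib

open FiniteDimensional

local notation "⟪" x ", " y "⟫" => @inner ℝ _ _ x y

/-- At most `n + 1` vectors in an `n`-dimensional real inner product space can be
pairwise obtuse. -/
lemma pairwise_obtuse_card_le : ∀ (n : ℕ) (E : Type) (_ : NormedAddCommGroup E)
    (_ : @InnerProductSpace ℝ E _ _) (_ : FiniteDimensional ℝ E)
    (_ : Module.finrank ℝ E = n) (m : ℕ) (x : Fin m → E),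
    (∀ i j, i ≠ j → ⟪x i, x j⟫ < 0) → m ≤ n + 1 := by
  intro n
  induction n with
  | zero =>
    intro E _ _ _ hrk m x hx
    by_contra h
    push_neg at h
    have h0 : (⟨0, by omega⟩ : Fin m) ≠ ⟨1, by omega⟩ := by
      simp [Fin.ext_iff]
    have := hx _ _ h0
    have hz : ∀ v : E, v = 0 := by
      intro v
      have : Subsingleton E := by
        rw [← Module.finrank_zero_iff (R := ℝ)] at *
        omega
      exact Subsingleton.elim v 0
    rw [hz (x ⟨0, by omega⟩)] at this
    simp at this
  | succ n ih =>
    intro E _ _ _ hrk m x hx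
    by_contra h
    push_neg at h
    -- m ≥ n + 3, in particular m ≥ 2
    have hm2 : 2 ≤ m := by omega
    set v : E := x ⟨m - 1, by omega⟩ with hv
    have hvne : v ≠ 0 := by
      intro h0
      have h01 : (⟨0, by omega⟩ : Fin m) ≠ ⟨m - 1, by omega⟩ := by
        simp [Fin.ext_iff]; omega
      have := hx _ _ h01
      rw [← hv, h0] at this
      simp at this
    have hvpos : (0:ℝ) < ‖v‖ ^ 2 := by
      have := norm_pos_iff.mpr hvne
      positivity
    -- project onto the orthogonal complement of v
    set K := (ℝ ∙ v)ᗮ with hK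
    have hrkK : Module.finrank ℝ K = n := by
      have h1 := Submodule.finrank_add_finrank_orthogonal (K := ℝ ∙ v)
      rw [finrank_span_singleton hvne] at h1
      rw [hK]
      omega
    -- projected vectors
    have hmem : ∀ i : Fin (m - 1),
        x ⟨i, by omega⟩ - (⟪v, x ⟨i, by omega⟩⟫ / ‖v‖ ^ 2) • v ∈ K := by
      intro i
      rw [hK, Submodule.mem_orthogonal_singleton_iff_inner_right]
      rw [inner_sub_right, real_inner_smul_right, real_inner_self_eq_norm_sq]
      field_simp
      ring
    set w : Fin (m - 1) → K := fun i =>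
      ⟨x ⟨i, by omega⟩ - (⟪v, x ⟨i, by omega⟩⟫ / ‖v‖ ^ 2) • v, hmem i⟩ with hw
    have hobt : ∀ i j : Fin (m - 1), i ≠ j → ⟪w i, w j⟫ < 0 := by
      intro i j hij
      have hij' : (⟨i, by omega⟩ : Fin m) ≠ ⟨j, by omega⟩ := by
        simp [Fin.ext_iff]
        exact fun h => hij (Fin.ext h)
      have hlast_i : (⟨(i : ℕ), by omega⟩ : Fin m) ≠ ⟨m - 1, by omega⟩ := by
        simp [Fin.ext_iff]; omega
      have hlast_j : (⟨(j : ℕ), by omega⟩ : Fin m) ≠ ⟨m - 1, by omega⟩ := by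
        simp [Fin.ext_iff]; omega
      have hiv : ⟪x ⟨i, by omega⟩, v⟫ < 0 := hx _ _ hlast_i
      have hjv : ⟪x ⟨j, by omega⟩, v⟫ < 0 := hx _ _ hlast_j
      have hxij : ⟪x (⟨i, by omega⟩ : Fin m), x ⟨j, by omega⟩⟫ < 0 := hx _ _ hij'
      have hcoe : ⟪w i, w j⟫ =
          ⟪(w i : E), (w j : E)⟫ := rfl
      rw [hcoe, hw]
      simp only
      rw [inner_sub_left, inner_sub_right, inner_sub_right, real_inner_smul_left,
        real_inner_smul_left, real_inner_smul_right, real_inner_smul_right,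
        real_inner_self_eq_norm_sq]
      have hvi : ⟪v, x (⟨i, by omega⟩ : Fin m)⟫ = ⟪x (⟨i, by omega⟩ : Fin m), v⟫ :=
        real_inner_comm _ _
      have hvj : ⟪v, x (⟨j, by omega⟩ : Fin m)⟫ = ⟪x (⟨j, by omega⟩ : Fin m), v⟫ :=
        real_inner_comm _ _
      rw [hvi, hvj]
      have hne : ‖v‖ ^ 2 ≠ 0 := ne_of_gt hvpos
      set p : ℝ := ‖v‖ ^ 2
      set a : ℝ := ⟪x (⟨i, by omega⟩ : Fin m), v⟫
      set b : ℝ := ⟪x (⟨j, by omega⟩ : Fin m), v⟫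
      set c : ℝ := ⟪x (⟨i, by omega⟩ : Fin m), x (⟨j, by omega⟩ : Fin m)⟫
      field_simp
      nlinarith [mul_pos (neg_pos.mpr hiv) (neg_pos.mpr hjv), mul_neg_of_neg_of_pos hxij hvpos]
    have := ih K _ _ (by infer_instance) hrkK (m - 1) w hobt
    omega

/-- Rankin orthoplex bound: among `N > D + 1` points on a sphere of radius `r`
in `ℝ^D`, some pair has squared distance at most `2r²`. -/
theorem rankin_orthoplex_bound {D N : ℕ} (hN : D + 1 < N) (r : ℝ)
    (x : Fin N → EuclideanSpace ℝ (Fin D)) (hx : ∀ k, ‖x k‖ = r) :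
    ∃ i j, i ≠ j ∧ ‖x i - x j‖ ^ 2 ≤ 2 * r ^ 2 := by
  by_contra h
  push_neg at h
  have hobt : ∀ i j : Fin N, i ≠ j → ⟪x i, x j⟫ < 0 := by
    intro i j hij
    have := h i j hij
    have hexp : ‖x i - x j‖ ^ 2 = ‖x i‖ ^ 2 - 2 * ⟪x i, x j⟫ + ‖x j‖ ^ 2 :=
      norm_sub_sq_real _ _
    rw [hx i, hx j] at hexp
    nlinarith
  have := pairwise_obtuse_card_le D (EuclideanSpace ℝ (Fin D)) _ _ (by infer_instance)
    (finrank_euclideanSpace_fin) N x hobt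
  omega
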